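/- For any fixed realized sequence of drawn arms x^1,…,x^T ∈ F and any z ∈ F, the MABSTA total reward satisfies R̂_total ≥ (1−γ)·Σ_{t=1}^T R̂_z(t) − (e−2)·α·(|E|/M^{N−2})·Σ_{t=1}^T Σ_{y∈F} R̂_y(t) − (N·ln M)/α, where R̂_total = Σ_{t=1}^T (Σ_{i=1}^N R_i^{(x^t_i)}(t) + Σ_{(m,n)∈E} R_{mn}^{(x^t_m x^t_n)}(t)). -/

import Mathlib

open Finset



lemma my_exp_quad {x : ℝ} (h0 : 0 ≤ x) (h1 : x ≤ 1) :
    Real.exp x ≤ 1 + x + (3/4) * x ^ 2 := by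
  have hb := Real.exp_bound (x := x) (by rw [abs_of_nonneg h0]; exact h1) (n := 2) (by norm_num)
  rw [abs_of_nonneg h0] at hb
  have h2 : ∑ m ∈ range 2, x ^ m / (m.factorial : ℝ) = 1 + x := by
    simp [Finset.sum_range_succ]
  rw [h2] at hb
  have := abs_le.mp hb
  have h3 : ((Nat.succ 2 : ℕ) : ℝ) / ((Nat.factorial 2 : ℕ) * ((2:ℕ):ℝ)) = 3/4 := by norm_num [Nat.factorial]
  nlinarith [this.2]

/-- fiber over one coordinate -/
lemma card_fiber_one {N M : ℕ} (i : Fin N) (j : Fin M) :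
    (Finset.univ.filter (fun z : Fin N → Fin M => z i = j)).card = M ^ (N - 1) := by
  have e : {z : Fin N → Fin M // z i = j} ≃ ({l : Fin N // l ≠ i} → Fin M) :=
    { toFun := fun z l => z.1 l.1
      invFun := fun f => ⟨fun l => if h : l = i then j else f ⟨l, h⟩, by simp⟩
      left_inv := fun z => Subtype.ext (funext fun l => by
        by_cases h : l = i
        · subst h; simp [z.2]
        · simp [h])
      right_inv := fun f => funext fun l => by simp [l.2] }
  have h1 : Fintype.card {z : Fin N → Fin M // z i = j}
      = (Finset.univ.filter (fun z : Fin N → Fin M => z i = j)).card :=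
    Fintype.card_subtype _
  have h2 : Fintype.card {l : Fin N // l ≠ i} = N - 1 := by
    simp [Fintype.card_subtype_compl]
  rw [← h1, Fintype.card_congr e, Fintype.card_fun, h2, Fintype.card_fin]



lemma card_fiber_two {N M : ℕ} {m n : Fin N} (hmn : m ≠ n) (j k : Fin M) :
    (Finset.univ.filter (fun z : Fin N → Fin M => z m = j ∧ z n = k)).card = M ^ (N - 2) := by
  have e : {z : Fin N → Fin M // z m = j ∧ z n = k} ≃ ({l : Fin N // l ≠ m ∧ l ≠ n} → Fin M) :=
    { toFun := fun z l => z.1 l.1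
      invFun := fun f => ⟨fun l => if h : l = m then j else if h' : l = n then k else f ⟨l, h, h'⟩,
        by constructor <;> simp [hmn.symm]⟩
      left_inv := fun z => Subtype.ext (funext fun l => by
        by_cases h : l = m
        · subst h; simp [z.2.1]
        · by_cases h' : l = n
          · subst h'; simp [h, z.2.2]
          · simp [h, h'])
      right_inv := fun f => funext fun l => by
        rcases l with ⟨l, h, h'⟩; simp [h, h'] }
  have h1 : Fintype.card {z : Fin N → Fin M // z m = j ∧ z n = k}
      = (Finset.univ.filter (fun z : Fin N → Fin M => z m = j ∧ z n = k)).card :=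
    Fintype.card_subtype _
  have h2 : Fintype.card {l : Fin N // l ≠ m ∧ l ≠ n} = N - 2 := by
    have : (Finset.univ.filter (fun l : Fin N => l ≠ m ∧ l ≠ n)) = ({m, n} : Finset (Fin N))ᶜ := by
      ext l; simp [not_or]
    rw [Fintype.card_subtype, this, Finset.card_compl, Finset.card_pair hmn, Fintype.card_fin]
  rw [← h1, Fintype.card_congr e, Fintype.card_fun, h2, Fintype.card_fin]

lemma pair_bound {ι : Type*} [Fintype ι] (p : ι → ℝ) (hp : ∀ y, 0 ≤ p y)
    (P Q : ι → Prop) [DecidablePred P] [DecidablePred Q]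
    (v u : ℝ) (hv : 0 ≤ v) (hu : 0 ≤ u)
    (hvS : v * ∑ y ∈ Finset.univ.filter P, p y ≤ 1) :
    ∑ y, p y * ((if P y then v else 0) * (if Q y then u else 0)) ≤ u := by
  have step1 : ∑ y, p y * ((if P y then v else 0) * (if Q y then u else 0))
      ≤ ∑ y, (if P y then p y * (v * u) else 0) := by
    apply Finset.sum_le_sum
    intro y _
    by_cases h : P y
    · simp only [h, if_true]
      by_cases h' : Q y
      · simp [h']
      · simp only [h', if_false, mul_zero]
        exact mul_nonneg (hp y) (mul_nonneg hv hu)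
    · simp [h]
  have step2 : ∑ y, (if P y then p y * (v * u) else 0)
      = (v * ∑ y ∈ Finset.univ.filter P, p y) * u := by
    rw [← Finset.sum_filter, Finset.mul_sum, Finset.sum_mul]
    exact Finset.sum_congr rfl (fun y _ => by ring)
  calc ∑ y, p y * ((if P y then v else 0) * (if Q y then u else 0))
      ≤ (v * ∑ y ∈ Finset.univ.filter P, p y) * u := step1.trans_eq step2
    _ ≤ 1 * u := mul_le_mul_of_nonneg_right hvS hu
    _ = u := one_mul u
lemma sum_p_ite {ι : Type*} [Fintype ι] (p : ι → ℝ) (P : ι → Prop) [DecidablePred P] (v : ℝ) :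
    ∑ y, p y * (if P y then v else 0) = (∑ y ∈ Finset.univ.filter P, p y) * v := by
  rw [Finset.sum_filter, Finset.sum_mul]
  exact Finset.sum_congr rfl (fun y _ => by by_cases h : P y <;> simp [h])

lemma sum_ite_const {ι : Type*} [Fintype ι] (P : ι → Prop) [DecidablePred P] (v : ℝ) :
    ∑ y, (if P y then v else 0) = ((Finset.univ.filter P).card : ℝ) * v := by
  rw [← Finset.sum_filter, Finset.sum_const, nsmul_eq_mul]

lemma block_bound {ι β κ : Type*} [Fintype ι] [DecidableEq β] [DecidableEq κ]
    (p : ι → ℝ) (hp : ∀ y, 0 ≤ p y)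
    (s : Finset β) (t : Finset κ)
    (P : β → ι → Prop) [∀ c, DecidablePred (P c)]
    (Q : κ → ι → Prop) [∀ c, DecidablePred (Q c)]
    (v : β → ℝ) (u : κ → ℝ)
    (hv : ∀ c ∈ s, 0 ≤ v c) (hu : ∀ d ∈ t, 0 ≤ u d)
    (hvS : ∀ c ∈ s, v c * ∑ y ∈ Finset.univ.filter (P c), p y ≤ 1) :
    ∑ y, p y * ((∑ c ∈ s, if P c y then v c else 0) * (∑ d ∈ t, if Q d y then u d else 0))
      ≤ (s.card : ℝ) * ∑ d ∈ t, u d := by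
  have expand : ∑ y, p y * ((∑ c ∈ s, if P c y then v c else 0) * (∑ d ∈ t, if Q d y then u d else 0))
      = ∑ c ∈ s, ∑ d ∈ t, ∑ y, p y * ((if P c y then v c else 0) * (if Q d y then u d else 0)) := by
    calc ∑ y, p y * ((∑ c ∈ s, if P c y then v c else 0) * (∑ d ∈ t, if Q d y then u d else 0))
        = ∑ y, ∑ c ∈ s, ∑ d ∈ t, p y * ((if P c y then v c else 0) * (if Q d y then u d else 0)) := by
          apply Finset.sum_congr rfl
          intro y _
          rw [Finset.sum_mul_sum]
          simp only [Finset.mul_sum]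
      _ = ∑ c ∈ s, ∑ y, ∑ d ∈ t, p y * ((if P c y then v c else 0) * (if Q d y then u d else 0)) :=
          Finset.sum_comm
      _ = ∑ c ∈ s, ∑ d ∈ t, ∑ y, p y * ((if P c y then v c else 0) * (if Q d y then u d else 0)) :=
          Finset.sum_congr rfl (fun c _ => Finset.sum_comm)
  rw [expand]
  calc ∑ c ∈ s, ∑ d ∈ t, ∑ y, p y * ((if P c y then v c else 0) * (if Q d y then u d else 0))
      ≤ ∑ c ∈ s, ∑ d ∈ t, u d := by
        apply Finset.sum_le_sum
        intro c hc
        apply Finset.sum_le_sum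
        intro d hd
        exact pair_bound p hp (P c) (Q d) (v c) (u d) (hv c hc) (hu d hd) (hvS c hc)
    _ = (s.card : ℝ) * ∑ d ∈ t, u d := by
        rw [Finset.sum_const, nsmul_eq_mul]

set_option maxHeartbeats 2000000 in
/-- **eq. (21) of the paper.**
For any fixed realized sequence of drawn arms `x^1,…,x^T ∈ F` and any `z ∈ F`,
the MABSTA total reward satisfies
`R̂_total ≥ (1−γ)·Σ_t R̂_z(t) − (e−2)·α·(|E|/M^{N−2})·Σ_t Σ_{y∈F} R̂_y(t) − (N·ln M)/α`. -/
theorem mabsta_total_reward_lower_bound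
    (N M T : ℕ) (hN : 2 ≤ N) (hM : 3 ≤ M) (hT : 1 ≤ T)
    (E : Finset (Fin N × Fin N)) (hE : ∀ e ∈ E, e.1 ≠ e.2) (hEcard : 3 ≤ E.card)
    (γ : ℝ) (hγ0 : 0 < γ) (hγ1 : γ < 1)
    (α : ℝ) (hα : α = γ / ((M : ℝ) * ((N : ℝ) + (E.card : ℝ) * (M : ℝ))))
    (R : Fin T → Fin N → Fin M → ℝ)
    (hR : ∀ t i j, R t i j ∈ Set.Icc (0 : ℝ) 1)
    (Re : Fin T → Fin N × Fin N → Fin M → Fin M → ℝ)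
    (hRe : ∀ t, ∀ e ∈ E, ∀ j k, Re t e j k ∈ Set.Icc (0 : ℝ) 1)
    (xs : Fin T → Fin N → Fin M)
    (w : ℕ → (Fin N → Fin M) → ℝ)
    (hw0 : ∀ y, w 0 y = 1)
    (p : Fin T → (Fin N → Fin M) → ℝ)
    (hp : ∀ (t : Fin T) (y : Fin N → Fin M), p t y =
      (1 - γ) * (w t y / ∑ z : Fin N → Fin M, w t z) + γ / (M : ℝ) ^ N)
    (Rhat : Fin T → Fin N → Fin M → ℝ)
    (hRhat : ∀ (t : Fin T) (i : Fin N) (j : Fin M), Rhat t i j =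
      if j = xs t i then
        R t i j /
          (∑ z ∈ Finset.univ.filter (fun z : Fin N → Fin M => z i = xs t i), p t z)
      else 0)
    (Rhate : Fin T → Fin N × Fin N → Fin M → Fin M → ℝ)
    (hRhate : ∀ (t : Fin T), ∀ e ∈ E, ∀ j k : Fin M, Rhate t e j k =
      if j = xs t e.1 ∧ k = xs t e.2 then
        Re t e j k /
          (∑ z ∈ Finset.univ.filter
            (fun z : Fin N → Fin M => z e.1 = xs t e.1 ∧ z e.2 = xs t e.2), p t z)
      else 0)
    (RhatArm : Fin T → (Fin N → Fin M) → ℝ)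
    (hRhatArm : ∀ (t : Fin T) (y : Fin N → Fin M), RhatArm t y =
      ∑ i, Rhat t i (y i) + ∑ e ∈ E, Rhate t e (y e.1) (y e.2))
    (hwrec : ∀ (t : Fin T) (y : Fin N → Fin M),
      w (t + 1) y = w t y * Real.exp (α * RhatArm t y)) :
    ∀ z : Fin N → Fin M,
      ∑ t, (∑ i, R t i (xs t i) + ∑ e ∈ E, Re t e (xs t e.1) (xs t e.2))
        ≥ (1 - γ) * (∑ t, RhatArm t z)
          - (Real.exp 1 - 2) * α * ((E.card : ℝ) / (M : ℝ) ^ (N - 2))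
              * (∑ t, ∑ y : Fin N → Fin M, RhatArm t y)
          - (N : ℝ) * Real.log M / α := by
  intro z
  classical
  have hM0 : (0:ℝ) < M := by exact_mod_cast (by omega : 0 < M)
  have hM3 : (3:ℝ) ≤ (M:ℝ) := by exact_mod_cast hM
  have hN2 : (2:ℝ) ≤ (N:ℝ) := by exact_mod_cast hN
  have hE3 : (3:ℝ) ≤ (E.card:ℝ) := by exact_mod_cast hEcard
  have hMN : (0:ℝ) < (M:ℝ)^N := by positivity
  have hden : (0:ℝ) < (M:ℝ) * ((N:ℝ) + (E.card:ℝ) * M) := by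
    have h0 : (0:ℝ) ≤ (E.card:ℝ)*M := by positivity
    apply mul_pos hM0
    linarith
  have hα0 : (0:ℝ) < α := by rw [hα]; exact div_pos hγ0 hden
  have h1γ : (0:ℝ) < 1 - γ := by linarith
  haveI : Nonempty (Fin M) := ⟨⟨0, by omega⟩⟩
  have hwpos : ∀ s, s ≤ T → ∀ y, 0 < w s y := by
    intro s
    induction s with
    | zero => intro _ y; rw [hw0]; norm_num
    | succ s ih =>
      intro hs y
      have hsT : s < T := by omega
      have key : w (s+1) y = w s y * Real.exp (α * RhatArm ⟨s, hsT⟩ y) := hwrec ⟨s, hsT⟩ y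
      rw [key]
      exact mul_pos (ih (by omega) y) (Real.exp_pos _)
  have hWpos : ∀ s, s ≤ T → 0 < ∑ y : Fin N → Fin M, w s y := fun s hs =>
    Finset.sum_pos (fun y _ => hwpos s hs y) Finset.univ_nonempty
  have htT : ∀ t : Fin T, (t:ℕ) ≤ T := fun t => le_of_lt t.2
  have hcard : ((Finset.univ : Finset (Fin N → Fin M)).card : ℝ) = (M:ℝ)^N := by
    rw [Finset.card_univ, Fintype.card_fun, Fintype.card_fin, Fintype.card_fin]
    push_cast
    rfl
  have hp_lb : ∀ (t : Fin T) y, γ/(M:ℝ)^N ≤ p t y := by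
    intro t y
    rw [hp]
    have h1 : 0 ≤ w ↑t y / ∑ z : Fin N → Fin M, w ↑t z :=
      div_nonneg (hwpos ↑t (htT t) y).le (hWpos ↑t (htT t)).le
    nlinarith
  have hp_pos : ∀ (t : Fin T) y, 0 < p t y := fun t y =>
    lt_of_lt_of_le (div_pos hγ0 hMN) (hp_lb t y)
  have hp_sum : ∀ t : Fin T, ∑ y : Fin N → Fin M, p t y = 1 := by
    intro t
    have hW := hWpos ↑t (htT t)
    calc ∑ y : Fin N → Fin M, p t y
        = ∑ y : Fin N → Fin M, ((1 - γ) * (w ↑t y / ∑ z : Fin N → Fin M, w ↑t z) + γ/(M:ℝ)^N) :=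
          Finset.sum_congr rfl (fun y _ => hp t y)
      _ = (1-γ) * ((∑ y : Fin N → Fin M, w ↑t y) / (∑ z : Fin N → Fin M, w ↑t z))
            + ((Finset.univ : Finset (Fin N → Fin M)).card : ℝ) * (γ/(M:ℝ)^N) := by
          rw [Finset.sum_add_distrib, ← Finset.mul_sum, ← Finset.sum_div, Finset.sum_const,
            nsmul_eq_mul]
      _ = 1 := by
          rw [div_self hW.ne', hcard]
          field_simp
          ring
  have hw_from_p : ∀ (t : Fin T) y,
      w ↑t y = (∑ y' : Fin N → Fin M, w ↑t y') * ((p t y - γ/(M:ℝ)^N) / (1-γ)) := by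
    intro t y
    have hW := (hWpos ↑t (htT t)).ne'
    rw [hp]
    field_simp
    ring
  set S1 : Fin T → Fin N → ℝ := fun t i =>
    ∑ z ∈ Finset.univ.filter (fun z : Fin N → Fin M => z i = xs t i), p t z with hS1
  set S2 : Fin T → Fin N × Fin N → ℝ := fun t e =>
    ∑ z ∈ Finset.univ.filter
      (fun z : Fin N → Fin M => z e.1 = xs t e.1 ∧ z e.2 = xs t e.2), p t z with hS2
  set av : Fin T → Fin N → ℝ := fun t i => R t i (xs t i) / S1 t i with hav
  set bv : Fin T → Fin N × Fin N → ℝ := fun t e => Re t e (xs t e.1) (xs t e.2) / S2 t e with hbv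
  have hpow1 : (M:ℝ)^N = (M:ℝ)^(N-1) * M := by
    rw [← pow_succ]
    congr 1
    omega
  have hpow2 : (M:ℝ)^N = (M:ℝ)^(N-2) * (M:ℝ)^2 := by
    rw [← pow_add]
    congr 1
    omega
  have hMN1 : (0:ℝ) < (M:ℝ)^(N-1) := by positivity
  have hMN2 : (0:ℝ) < (M:ℝ)^(N-2) := by positivity
  have hS1_lb : ∀ (t : Fin T) (i : Fin N), γ/(M:ℝ) ≤ S1 t i := by
    intro t i
    have hstep := Finset.card_nsmul_le_sum
      (Finset.univ.filter (fun z : Fin N → Fin M => z i = xs t i)) (p t) (γ/(M:ℝ)^N)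
      (fun z _ => hp_lb t z)
    rw [nsmul_eq_mul, card_fiber_one i (xs t i)] at hstep
    refine le_trans (le_of_eq ?_) hstep
    push_cast
    rw [hpow1]
    field_simp
  have hS2_lb : ∀ (t : Fin T), ∀ e ∈ E, γ/(M:ℝ)^2 ≤ S2 t e := by
    intro t e he
    have hstep := Finset.card_nsmul_le_sum
      (Finset.univ.filter (fun z : Fin N → Fin M => z e.1 = xs t e.1 ∧ z e.2 = xs t e.2))
      (p t) (γ/(M:ℝ)^N) (fun z _ => hp_lb t z)
    rw [nsmul_eq_mul, card_fiber_two (hE e he) (xs t e.1) (xs t e.2)] at hstep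
    refine le_trans (le_of_eq ?_) hstep
    push_cast
    rw [hpow2]
    field_simp
  have hS1_pos : ∀ (t : Fin T) (i : Fin N), 0 < S1 t i := fun t i =>
    lt_of_lt_of_le (div_pos hγ0 hM0) (hS1_lb t i)
  have hS2_pos : ∀ (t : Fin T), ∀ e ∈ E, 0 < S2 t e := fun t e he =>
    lt_of_lt_of_le (div_pos hγ0 (by positivity)) (hS2_lb t e he)
  have hav_nonneg : ∀ (t : Fin T) (i : Fin N), 0 ≤ av t i := fun t i =>
    div_nonneg (hR t i (xs t i)).1 (hS1_pos t i).le
  have hbv_nonneg : ∀ (t : Fin T), ∀ e ∈ E, 0 ≤ bv t e := fun t e he =>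
    div_nonneg (hRe t e he (xs t e.1) (xs t e.2)).1 (hS2_pos t e he).le
  have hav_le : ∀ (t : Fin T) (i : Fin N), av t i ≤ (M:ℝ)/γ := by
    intro t i
    have h2 := (hR t i (xs t i)).2
    calc av t i ≤ 1 / (γ/(M:ℝ)) :=
          div_le_div₀ (by norm_num) h2 (div_pos hγ0 hM0) (hS1_lb t i)
      _ = (M:ℝ)/γ := one_div_div γ M
  have hbv_le : ∀ (t : Fin T), ∀ e ∈ E, bv t e ≤ (M:ℝ)^2/γ := by
    intro t e he
    have h2 := (hRe t e he (xs t e.1) (xs t e.2)).2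
    calc bv t e ≤ 1 / (γ/(M:ℝ)^2) :=
          div_le_div₀ (by norm_num) h2 (div_pos hγ0 (by positivity)) (hS2_lb t e he)
      _ = (M:ℝ)^2/γ := one_div_div γ ((M:ℝ)^2)
  have hav_mul : ∀ (t : Fin T) (i : Fin N), av t i * S1 t i = R t i (xs t i) := fun t i =>
    div_mul_cancel₀ _ (hS1_pos t i).ne'
  have hbv_mul : ∀ (t : Fin T), ∀ e ∈ E, bv t e * S2 t e = Re t e (xs t e.1) (xs t e.2) :=
    fun t e he => div_mul_cancel₀ _ (hS2_pos t e he).ne'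
  have hav_mul_le : ∀ (t : Fin T) (i : Fin N), av t i * S1 t i ≤ 1 := fun t i =>
    (hav_mul t i).trans_le (hR t i (xs t i)).2
  have hbv_mul_le : ∀ (t : Fin T), ∀ e ∈ E, bv t e * S2 t e ≤ 1 := fun t e he =>
    (hbv_mul t e he).trans_le (hRe t e he (xs t e.1) (xs t e.2)).2
  have hRhatArm' : ∀ (t : Fin T) (y : Fin N → Fin M), RhatArm t y =
      (∑ i, if y i = xs t i then av t i else 0)
      + (∑ e ∈ E, if y e.1 = xs t e.1 ∧ y e.2 = xs t e.2 then bv t e else 0) := by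
    intro t y
    rw [hRhatArm]
    congr 1
    · apply Finset.sum_congr rfl
      intro i _
      rw [hRhat]
      by_cases h : y i = xs t i
      · rw [if_pos h, if_pos h, h, hav]
      · rw [if_neg h, if_neg h]
    · apply Finset.sum_congr rfl
      intro e he
      rw [hRhate t e he]
      by_cases h : y e.1 = xs t e.1 ∧ y e.2 = xs t e.2
      · rw [if_pos h, if_pos h, h.1, h.2, hbv]
      · rw [if_neg h, if_neg h]
  have hArm_nonneg : ∀ (t : Fin T) (y : Fin N → Fin M), 0 ≤ RhatArm t y := by
    intro t y
    rw [hRhatArm' t y]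
    apply add_nonneg
    · apply Finset.sum_nonneg
      intro i _
      by_cases h : y i = xs t i
      · rw [if_pos h]; exact hav_nonneg t i
      · rw [if_neg h]
    · apply Finset.sum_nonneg
      intro e he
      by_cases h : y e.1 = xs t e.1 ∧ y e.2 = xs t e.2
      · rw [if_pos h]; exact hbv_nonneg t e he
      · rw [if_neg h]
  have hArm_le : ∀ (t : Fin T) (y : Fin N → Fin M), α * RhatArm t y ≤ 1 := by
    intro t y
    have h1 : RhatArm t y ≤ (N:ℝ) * ((M:ℝ)/γ) + (E.card:ℝ) * ((M:ℝ)^2/γ) := by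
      rw [hRhatArm' t y]
      apply add_le_add
      · have := Finset.sum_le_card_nsmul Finset.univ
          (fun i => if y i = xs t i then av t i else 0) ((M:ℝ)/γ) (fun i _ => by
            show (if y i = xs t i then av t i else 0) ≤ (M:ℝ)/γ
            by_cases h : y i = xs t i
            · rw [if_pos h]; exact hav_le t i
            · rw [if_neg h]; positivity)
        rwa [Finset.card_univ, Fintype.card_fin, nsmul_eq_mul] at this
      · have := Finset.sum_le_card_nsmul E
          (fun e => if y e.1 = xs t e.1 ∧ y e.2 = xs t e.2 then bv t e else 0) ((M:ℝ)^2/γ)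
          (fun e he => by
            show (if y e.1 = xs t e.1 ∧ y e.2 = xs t e.2 then bv t e else 0) ≤ (M:ℝ)^2/γ
            by_cases h : y e.1 = xs t e.1 ∧ y e.2 = xs t e.2
            · rw [if_pos h]; exact hbv_le t e he
            · rw [if_neg h]; positivity)
        rwa [nsmul_eq_mul] at this
    have h2 : (N:ℝ) * ((M:ℝ)/γ) + (E.card:ℝ) * ((M:ℝ)^2/γ) = 1/α := by
      rw [hα]
      rw [one_div_div]
      ring
    calc α * RhatArm t y ≤ α * (1/α) :=
          mul_le_mul_of_nonneg_left (h1.trans_eq h2) hα0.le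
      _ = 1 := mul_one_div_cancel hα0.ne'
  set Av : Fin T → ℝ := fun t =>
    (∑ i, R t i (xs t i)) + ∑ e ∈ E, Re t e (xs t e.1) (xs t e.2) with hAv
  set Uv : Fin T → ℝ := fun t => ∑ y : Fin N → Fin M, RhatArm t y with hUv
  set Qv : Fin T → ℝ := fun t => ∑ y : Fin N → Fin M, p t y * (RhatArm t y)^2 with hQv
  have hUv_nonneg : ∀ t : Fin T, 0 ≤ Uv t := fun t =>
    Finset.sum_nonneg (fun y _ => hArm_nonneg t y)
  have hpArm : ∀ t : Fin T, ∑ y : Fin N → Fin M, p t y * RhatArm t y = Av t := by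
    intro t
    calc ∑ y : Fin N → Fin M, p t y * RhatArm t y
        = ∑ y : Fin N → Fin M,
            (p t y * (∑ i, if y i = xs t i then av t i else 0)
            + p t y * (∑ e ∈ E, if y e.1 = xs t e.1 ∧ y e.2 = xs t e.2 then bv t e else 0)) := by
          apply Finset.sum_congr rfl
          intro y _
          rw [hRhatArm' t y]
          ring
      _ = (∑ y : Fin N → Fin M, p t y * (∑ i, if y i = xs t i then av t i else 0))
          + (∑ y : Fin N → Fin M,
              p t y * (∑ e ∈ E, if y e.1 = xs t e.1 ∧ y e.2 = xs t e.2 then bv t e else 0)) :=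
          Finset.sum_add_distrib
      _ = Av t := by
          rw [hAv]
          congr 1
          · calc ∑ y : Fin N → Fin M, p t y * (∑ i, if y i = xs t i then av t i else 0)
                = ∑ i, ∑ y : Fin N → Fin M, p t y * (if y i = xs t i then av t i else 0) := by
                  simp only [Finset.mul_sum]
                  exact Finset.sum_comm
              _ = ∑ i, R t i (xs t i) := by
                  apply Finset.sum_congr rfl
                  intro i _
                  rw [sum_p_ite (p t) (fun y : Fin N → Fin M => y i = xs t i) (av t i)]
                  rw [mul_comm]
                  exact hav_mul t i
          · calc ∑ y : Fin N → Fin M,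
                  p t y * (∑ e ∈ E, if y e.1 = xs t e.1 ∧ y e.2 = xs t e.2 then bv t e else 0)
                = ∑ e ∈ E, ∑ y : Fin N → Fin M,
                    p t y * (if y e.1 = xs t e.1 ∧ y e.2 = xs t e.2 then bv t e else 0) := by
                  simp only [Finset.mul_sum]
                  exact Finset.sum_comm
              _ = ∑ e ∈ E, Re t e (xs t e.1) (xs t e.2) := by
                  apply Finset.sum_congr rfl
                  intro e he
                  rw [sum_p_ite (p t)
                    (fun y : Fin N → Fin M => y e.1 = xs t e.1 ∧ y e.2 = xs t e.2) (bv t e)]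
                  rw [mul_comm]
                  exact hbv_mul t e he
  have hU_eq : ∀ t : Fin T,
      Uv t = (M:ℝ)^(N-1) * (∑ i, av t i) + (M:ℝ)^(N-2) * (∑ e ∈ E, bv t e) := by
    intro t
    rw [hUv]
    calc ∑ y : Fin N → Fin M, RhatArm t y
        = (∑ y : Fin N → Fin M, ∑ i, if y i = xs t i then av t i else 0)
          + (∑ y : Fin N → Fin M,
              ∑ e ∈ E, if y e.1 = xs t e.1 ∧ y e.2 = xs t e.2 then bv t e else 0) := by
          rw [← Finset.sum_add_distrib]
          exact Finset.sum_congr rfl (fun y _ => hRhatArm' t y)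
      _ = (M:ℝ)^(N-1) * (∑ i, av t i) + (M:ℝ)^(N-2) * (∑ e ∈ E, bv t e) := by
          congr 1
          · calc (∑ y : Fin N → Fin M, ∑ i, if y i = xs t i then av t i else 0)
                = ∑ i, ∑ y : Fin N → Fin M, (if y i = xs t i then av t i else 0) :=
                  Finset.sum_comm
              _ = ∑ i, (M:ℝ)^(N-1) * av t i := by
                  apply Finset.sum_congr rfl
                  intro i _
                  rw [sum_ite_const (fun y : Fin N → Fin M => y i = xs t i) (av t i),
                    card_fiber_one i (xs t i)]
                  push_cast
                  ring
              _ = (M:ℝ)^(N-1) * (∑ i, av t i) := by rw [Finset.mul_sum]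
          · calc (∑ y : Fin N → Fin M,
                  ∑ e ∈ E, if y e.1 = xs t e.1 ∧ y e.2 = xs t e.2 then bv t e else 0)
                = ∑ e ∈ E, ∑ y : Fin N → Fin M,
                    (if y e.1 = xs t e.1 ∧ y e.2 = xs t e.2 then bv t e else 0) :=
                  Finset.sum_comm
              _ = ∑ e ∈ E, (M:ℝ)^(N-2) * bv t e := by
                  apply Finset.sum_congr rfl
                  intro e he
                  rw [sum_ite_const
                    (fun y : Fin N → Fin M => y e.1 = xs t e.1 ∧ y e.2 = xs t e.2) (bv t e),
                    card_fiber_two (hE e he) (xs t e.1) (xs t e.2)]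
                  push_cast
                  ring
              _ = (M:ℝ)^(N-2) * (∑ e ∈ E, bv t e) := by rw [Finset.mul_sum]
  have hNcard : (((Finset.univ : Finset (Fin N))).card : ℝ) = (N:ℝ) := by
    rw [Finset.card_univ, Fintype.card_fin]
  have hQ_le : ∀ t : Fin T, Qv t ≤
      ((N:ℝ) + 2*(E.card:ℝ)) * (∑ i, av t i) + (E.card:ℝ) * (∑ e ∈ E, bv t e) := by
    intro t
    have hsplit : Qv t =
        (∑ y : Fin N → Fin M, p t y *
          ((∑ i, if y i = xs t i then av t i else 0)
            * (∑ i, if y i = xs t i then av t i else 0)))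
      + (2 * ∑ y : Fin N → Fin M, p t y *
          ((∑ e ∈ E, if y e.1 = xs t e.1 ∧ y e.2 = xs t e.2 then bv t e else 0)
            * (∑ i, if y i = xs t i then av t i else 0)))
      + (∑ y : Fin N → Fin M, p t y *
          ((∑ e ∈ E, if y e.1 = xs t e.1 ∧ y e.2 = xs t e.2 then bv t e else 0)
            * (∑ e ∈ E, if y e.1 = xs t e.1 ∧ y e.2 = xs t e.2 then bv t e else 0))) := by
      rw [hQv, Finset.mul_sum, ← Finset.sum_add_distrib, ← Finset.sum_add_distrib]
      apply Finset.sum_congr rfl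
      intro y _
      rw [hRhatArm' t y]
      ring
    have hB1 := block_bound (p t) (fun y => (hp_pos t y).le) Finset.univ Finset.univ
      (fun i (y : Fin N → Fin M) => y i = xs t i) (fun i (y : Fin N → Fin M) => y i = xs t i)
      (av t) (av t) (fun i _ => hav_nonneg t i) (fun i _ => hav_nonneg t i)
      (fun i _ => hav_mul_le t i)
    have hB2 := block_bound (p t) (fun y => (hp_pos t y).le) E Finset.univ
      (fun e (y : Fin N → Fin M) => y e.1 = xs t e.1 ∧ y e.2 = xs t e.2)
      (fun i (y : Fin N → Fin M) => y i = xs t i)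
      (bv t) (av t) (fun e he => hbv_nonneg t e he) (fun i _ => hav_nonneg t i)
      (fun e he => hbv_mul_le t e he)
    have hB3 := block_bound (p t) (fun y => (hp_pos t y).le) E E
      (fun e (y : Fin N → Fin M) => y e.1 = xs t e.1 ∧ y e.2 = xs t e.2)
      (fun e (y : Fin N → Fin M) => y e.1 = xs t e.1 ∧ y e.2 = xs t e.2)
      (bv t) (bv t) (fun e he => hbv_nonneg t e he) (fun e he => hbv_nonneg t e he)
      (fun e he => hbv_mul_le t e he)
    rw [hNcard] at hB1
    rw [hsplit]
    linarith [hB1, hB2, hB3]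
  have hα_clear : α * ((M:ℝ) * ((N:ℝ) + (E.card:ℝ)*M)) = γ := by
    rw [hα]
    exact div_mul_cancel₀ γ hden.ne'
  have hc1 : (3/4)*α*((N:ℝ) + 2*(E.card:ℝ)) ≤ γ/(M:ℝ) := by
    rw [le_div_iff₀ hM0]
    have hgap : (0:ℝ) ≤ α * ((M:ℝ) * ((N:ℝ)/4 + (E.card:ℝ)*((M:ℝ) - 3/2))) :=
      mul_nonneg hα0.le (mul_nonneg hM0.le (by nlinarith))
    have hid : (3/4)*α*((N:ℝ) + 2*(E.card:ℝ))*(M:ℝ)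
        = α * ((M:ℝ) * ((N:ℝ) + (E.card:ℝ)*M))
          - α * ((M:ℝ) * ((N:ℝ)/4 + (E.card:ℝ)*((M:ℝ) - 3/2))) := by ring
    linarith [hα_clear, hgap, hid.le, hid.ge]
  have hc2 : (3/4)*α*(E.card:ℝ) ≤ γ/(M:ℝ)^2 := by
    rw [le_div_iff₀ (by positivity : (0:ℝ) < (M:ℝ)^2)]
    have hgap : (0:ℝ) ≤ α * ((M:ℝ) * ((N:ℝ) + (1/4)*(E.card:ℝ)*(M:ℝ))) :=
      mul_nonneg hα0.le (mul_nonneg hM0.le (add_nonneg (Nat.cast_nonneg _) (mul_nonneg (mul_nonneg (by norm_num) (Nat.cast_nonneg _)) hM0.le)))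
    have hid : (3/4)*α*(E.card:ℝ)*(M:ℝ)^2
        = α * ((M:ℝ) * ((N:ℝ) + (E.card:ℝ)*M))
          - α * ((M:ℝ) * ((N:ℝ) + (1/4)*(E.card:ℝ)*(M:ℝ))) := by ring
    linarith [hα_clear, hgap, hid.le, hid.ge]
  have he1 : γ/(M:ℝ)^N * (M:ℝ)^(N-1) = γ/(M:ℝ) := by
    rw [hpow1]
    field_simp
  have he2 : γ/(M:ℝ)^N * (M:ℝ)^(N-2) = γ/(M:ℝ)^2 := by
    rw [hpow2]
    field_simp
  have hkey : ∀ t : Fin T, (3/4)*α*Qv t ≤ (γ/(M:ℝ)^N) * Uv t := by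
    intro t
    have hsa : 0 ≤ ∑ i, av t i := Finset.sum_nonneg (fun i _ => hav_nonneg t i)
    have hsb : 0 ≤ ∑ e ∈ E, bv t e := Finset.sum_nonneg (fun e he => hbv_nonneg t e he)
    have h1 : (3/4)*α*Qv t ≤ (3/4)*α*(((N:ℝ)+2*(E.card:ℝ)) * (∑ i, av t i)
        + (E.card:ℝ) * (∑ e ∈ E, bv t e)) :=
      mul_le_mul_of_nonneg_left (hQ_le t) (by positivity)
    have h2 : (γ/(M:ℝ)^N) * Uv t
        = (γ/(M:ℝ)) * (∑ i, av t i) + (γ/(M:ℝ)^2) * (∑ e ∈ E, bv t e) := by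
      calc (γ/(M:ℝ)^N) * Uv t
          = (γ/(M:ℝ)^N * (M:ℝ)^(N-1)) * (∑ i, av t i)
            + (γ/(M:ℝ)^N * (M:ℝ)^(N-2)) * (∑ e ∈ E, bv t e) := by rw [hU_eq t]; ring
        _ = (γ/(M:ℝ)) * (∑ i, av t i) + (γ/(M:ℝ)^2) * (∑ e ∈ E, bv t e) := by rw [he1, he2]
    linarith [h1, mul_le_mul_of_nonneg_right hc1 hsa, mul_le_mul_of_nonneg_right hc2 hsb,
      h2.le, h2.ge]
  have hc_nonneg : (0:ℝ) ≤ γ/(M:ℝ)^N := (div_pos hγ0 hMN).le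
  have hstep : ∀ t : Fin T,
      Real.log (∑ y : Fin N → Fin M, w (↑t+1) y) - Real.log (∑ y : Fin N → Fin M, w ↑t y)
        ≤ (α * (Av t - (γ/(M:ℝ)^N) * Uv t) + (3/4)*α^2 * Qv t) / (1-γ) := by
    intro t
    have hWt := hWpos ↑t (htT t)
    have hWt1 := hWpos (↑t+1) t.2
    set u : ℝ := (α * (Av t - (γ/(M:ℝ)^N) * Uv t) + (3/4)*α^2 * Qv t) / (1-γ) with hu
    have hsum_pc : ∑ y : Fin N → Fin M, (p t y - γ/(M:ℝ)^N) = 1 - γ := by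
      rw [Finset.sum_sub_distrib, hp_sum t, Finset.sum_const, nsmul_eq_mul, hcard]
      field_simp
    have hkey2 : ∑ y : Fin N → Fin M, w (↑t+1) y
        ≤ (∑ y : Fin N → Fin M, w ↑t y) * (1 + u) := by
      have hterm : ∀ y : Fin N → Fin M, w (↑t+1) y
          ≤ ((∑ y' : Fin N → Fin M, w ↑t y') / (1-γ))
            * ((p t y - γ/(M:ℝ)^N)
              * (1 + α * RhatArm t y + (3/4)*(α * RhatArm t y)^2)) := by
        intro y
        have h1 : w (↑t+1) y = w ↑t y * Real.exp (α * RhatArm t y) := hwrec t y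
        rw [h1, hw_from_p t y]
        have h2 : Real.exp (α * RhatArm t y)
            ≤ 1 + α * RhatArm t y + (3/4)*(α * RhatArm t y)^2 :=
          my_exp_quad (mul_nonneg hα0.le (hArm_nonneg t y)) (hArm_le t y)
        have h3 : 0 ≤ (∑ y' : Fin N → Fin M, w ↑t y') * ((p t y - γ/(M:ℝ)^N)/(1-γ)) :=
          mul_nonneg hWt.le (div_nonneg (by linarith [hp_lb t y]) h1γ.le)
        calc (∑ y' : Fin N → Fin M, w ↑t y') * ((p t y - γ/(M:ℝ)^N)/(1-γ))
              * Real.exp (α * RhatArm t y)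
            ≤ (∑ y' : Fin N → Fin M, w ↑t y') * ((p t y - γ/(M:ℝ)^N)/(1-γ))
              * (1 + α * RhatArm t y + (3/4)*(α * RhatArm t y)^2) :=
              mul_le_mul_of_nonneg_left h2 h3
          _ = ((∑ y' : Fin N → Fin M, w ↑t y') / (1-γ))
              * ((p t y - γ/(M:ℝ)^N)
                * (1 + α * RhatArm t y + (3/4)*(α * RhatArm t y)^2)) := by ring
      have hexpand : ∀ y : Fin N → Fin M,
          (p t y - γ/(M:ℝ)^N) * (1 + α * RhatArm t y + (3/4)*(α * RhatArm t y)^2)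
            ≤ (p t y - γ/(M:ℝ)^N)
              + (α * (p t y * RhatArm t y) - α * ((γ/(M:ℝ)^N) * RhatArm t y))
              + (3/4)*α^2 * (p t y * (RhatArm t y)^2) := by
        intro y
        have h4 : 0 ≤ (3/4)*α^2 * ((γ/(M:ℝ)^N) * (RhatArm t y)^2) := by positivity
        nlinarith [h4]
      calc ∑ y : Fin N → Fin M, w (↑t+1) y
          ≤ ∑ y : Fin N → Fin M, ((∑ y' : Fin N → Fin M, w ↑t y') / (1-γ))
              * ((p t y - γ/(M:ℝ)^N)
                * (1 + α * RhatArm t y + (3/4)*(α * RhatArm t y)^2)) :=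
            Finset.sum_le_sum (fun y _ => hterm y)
        _ ≤ ∑ y : Fin N → Fin M, ((∑ y' : Fin N → Fin M, w ↑t y') / (1-γ))
              * ((p t y - γ/(M:ℝ)^N)
                + (α * (p t y * RhatArm t y) - α * ((γ/(M:ℝ)^N) * RhatArm t y))
                + (3/4)*α^2 * (p t y * (RhatArm t y)^2)) :=
            Finset.sum_le_sum (fun y _ => mul_le_mul_of_nonneg_left (hexpand y)
              (div_nonneg hWt.le h1γ.le))
        _ = ((∑ y' : Fin N → Fin M, w ↑t y') / (1-γ))
              * ((1 - γ) + (α * Av t - α * ((γ/(M:ℝ)^N) * Uv t)) + (3/4)*α^2 * Qv t) := by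
            rw [← Finset.mul_sum]
            congr 1
            rw [Finset.sum_add_distrib, Finset.sum_add_distrib, hsum_pc,
              Finset.sum_sub_distrib, ← Finset.mul_sum, ← Finset.mul_sum, ← Finset.mul_sum,
              ← Finset.mul_sum, hpArm t]
        _ = (∑ y : Fin N → Fin M, w ↑t y) * (1 + u) := by
            rw [hu]
            field_simp
            ring
    have h1u : 0 < 1 + u := by
      by_contra hcon
      push_neg at hcon
      nlinarith [hWt1, hWt, hkey2]
    calc Real.log (∑ y : Fin N → Fin M, w (↑t+1) y) - Real.log (∑ y : Fin N → Fin M, w ↑t y)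
        ≤ Real.log ((∑ y : Fin N → Fin M, w ↑t y) * (1+u))
            - Real.log (∑ y : Fin N → Fin M, w ↑t y) := by
          have := Real.log_le_log hWt1 hkey2
          linarith
      _ = Real.log (1+u) := by
          rw [Real.log_mul hWt.ne' h1u.ne']
          ring
      _ ≤ u := by
          have := Real.log_le_sub_one_of_pos h1u
          linarith
  have hlogW0 : Real.log (∑ y : Fin N → Fin M, w 0 y) = (N:ℝ) * Real.log M := by
    have h1 : ∑ y : Fin N → Fin M, w 0 y = ((M:ℝ))^N := by
      calc ∑ y : Fin N → Fin M, w 0 y = ∑ _y : Fin N → Fin M, (1:ℝ) :=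
            Finset.sum_congr rfl (fun y _ => hw0 y)
        _ = ((Finset.univ : Finset (Fin N → Fin M)).card : ℝ) := by
            rw [Finset.sum_const, nsmul_eq_mul, mul_one]
        _ = (M:ℝ)^N := hcard
    rw [h1, Real.log_pow]
  have htel1 : Real.log (∑ y : Fin N → Fin M, w T y) - Real.log (∑ y : Fin N → Fin M, w 0 y)
      = ∑ t : Fin T, (Real.log (∑ y : Fin N → Fin M, w (↑t+1) y)
          - Real.log (∑ y : Fin N → Fin M, w ↑t y)) := by
    rw [Fin.sum_univ_eq_sum_range
      (fun n => Real.log (∑ y : Fin N → Fin M, w (n+1) y)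
        - Real.log (∑ y : Fin N → Fin M, w n y)) T,
      Finset.sum_range_sub (fun n => Real.log (∑ y : Fin N → Fin M, w n y)) T]
  have hwTz : Real.log (w T z) = α * ∑ t : Fin T, RhatArm t z := by
    have h1 : ∀ t : Fin T, Real.log (w (↑t+1) z) - Real.log (w ↑t z) = α * RhatArm t z := by
      intro t
      rw [hwrec t z, Real.log_mul (hwpos ↑t (htT t) z).ne' (Real.exp_ne_zero _), Real.log_exp]
      ring
    calc Real.log (w T z)
        = Real.log (w T z) - Real.log (w 0 z) := by rw [hw0 z, Real.log_one, sub_zero]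
      _ = ∑ n ∈ Finset.range T, (Real.log (w (n+1) z) - Real.log (w n z)) :=
          (Finset.sum_range_sub (fun n => Real.log (w n z)) T).symm
      _ = ∑ t : Fin T, (Real.log (w (↑t+1) z) - Real.log (w ↑t z)) :=
          (Fin.sum_univ_eq_sum_range (fun n => Real.log (w (n+1) z) - Real.log (w n z)) T).symm
      _ = ∑ t : Fin T, α * RhatArm t z := Finset.sum_congr rfl (fun t _ => h1 t)
      _ = α * ∑ t : Fin T, RhatArm t z := by rw [Finset.mul_sum]
  have hWTz : Real.log (w T z) ≤ Real.log (∑ y : Fin N → Fin M, w T y) :=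
    Real.log_le_log (hwpos T le_rfl z)
      (Finset.single_le_sum (fun y _ => (hwpos T le_rfl y).le) (Finset.mem_univ z))
  have hmain : α * (∑ t : Fin T, RhatArm t z) - (N:ℝ) * Real.log M
      ≤ ∑ t : Fin T, (α * (Av t - (γ/(M:ℝ)^N) * Uv t) + (3/4)*α^2 * Qv t) / (1-γ) := by
    calc α * (∑ t : Fin T, RhatArm t z) - (N:ℝ) * Real.log M
        = Real.log (w T z) - Real.log (∑ y : Fin N → Fin M, w 0 y) := by rw [hwTz, hlogW0]
      _ ≤ Real.log (∑ y : Fin N → Fin M, w T y)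
            - Real.log (∑ y : Fin N → Fin M, w 0 y) := by linarith [hWTz]
      _ = ∑ t : Fin T, (Real.log (∑ y : Fin N → Fin M, w (↑t+1) y)
            - Real.log (∑ y : Fin N → Fin M, w ↑t y)) := htel1
      _ ≤ ∑ t : Fin T, (α * (Av t - (γ/(M:ℝ)^N)*Uv t) + (3/4)*α^2*Qv t)/(1-γ) :=
          Finset.sum_le_sum (fun t _ => hstep t)
  have hform : ∑ t : Fin T, (α * (Av t - (γ/(M:ℝ)^N)*Uv t) + (3/4)*α^2*Qv t)/(1-γ)
      = (α/(1-γ)) * ∑ t : Fin T, (Av t - (γ/(M:ℝ)^N)*Uv t + (3/4)*α*Qv t) := by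
    rw [Finset.mul_sum]
    apply Finset.sum_congr rfl
    intro t _
    field_simp
  have hD2 : (1-γ) * (∑ t : Fin T, RhatArm t z) - (1-γ) * ((N:ℝ)*Real.log M) / α
      ≤ ∑ t : Fin T, (Av t - (γ/(M:ℝ)^N)*Uv t + (3/4)*α*Qv t) := by
    rw [hform] at hmain
    have h0 := mul_le_mul_of_nonneg_left hmain (le_of_lt (div_pos h1γ hα0))
    have hL : (1-γ)/α * (α * (∑ t : Fin T, RhatArm t z) - (N:ℝ)*Real.log M)
        = (1-γ)*(∑ t : Fin T, RhatArm t z) - (1-γ)*((N:ℝ)*Real.log M)/α := by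
      field_simp
    have hca : (1-γ)/α * (α/(1-γ)) = 1 := by
      field_simp
    have hR2 : (1-γ)/α * ((α/(1-γ)) * ∑ t : Fin T, (Av t - (γ/(M:ℝ)^N)*Uv t + (3/4)*α*Qv t))
        = ∑ t : Fin T, (Av t - (γ/(M:ℝ)^N)*Uv t + (3/4)*α*Qv t) := by
      rw [← mul_assoc, hca, one_mul]
    linarith [h0, hL.le, hL.ge, hR2.le, hR2.ge]
  have hsum_split : ∑ t : Fin T, (Av t - (γ/(M:ℝ)^N)*Uv t + (3/4)*α*Qv t)
      + ∑ t : Fin T, ((γ/(M:ℝ)^N)*Uv t - (3/4)*α*Qv t) = ∑ t : Fin T, Av t := by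
    rw [← Finset.sum_add_distrib]
    exact Finset.sum_congr rfl (fun t _ => by ring)
  have hpos2 : 0 ≤ ∑ t : Fin T, ((γ/(M:ℝ)^N)*Uv t - (3/4)*α*Qv t) :=
    Finset.sum_nonneg (fun t _ => by linarith [hkey t])
  have hgoal1 : ∑ t : Fin T, (∑ i, R t i (xs t i) + ∑ e ∈ E, Re t e (xs t e.1) (xs t e.2))
      = ∑ t : Fin T, Av t := Finset.sum_congr rfl (fun t _ => by rw [hAv])
  have hgoal2 : ∑ t : Fin T, ∑ y : Fin N → Fin M, RhatArm t y = ∑ t : Fin T, Uv t :=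
    Finset.sum_congr rfl (fun t _ => by rw [hUv])
  have hexp2 : (0:ℝ) ≤ Real.exp 1 - 2 := by nlinarith [Real.add_one_le_exp 1]
  have hUsum_nonneg : 0 ≤ ∑ t : Fin T, Uv t := Finset.sum_nonneg (fun t _ => hUv_nonneg t)
  have hlast : 0 ≤ (Real.exp 1 - 2) * α * ((E.card:ℝ)/(M:ℝ)^(N-2)) * (∑ t : Fin T, Uv t) :=
    mul_nonneg (mul_nonneg (mul_nonneg hexp2 hα0.le)
      (div_nonneg (Nat.cast_nonneg _) hMN2.le)) hUsum_nonneg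
  have hlogM : 0 ≤ Real.log M := Real.log_nonneg (by linarith)
  have hKK : (1-γ)*((N:ℝ)*Real.log M)/α ≤ (N:ℝ)*Real.log M/α := by
    have h5 : 0 ≤ (N:ℝ)*Real.log M := mul_nonneg (Nat.cast_nonneg N) hlogM
    rw [div_le_div_iff₀ hα0 hα0]
    nlinarith [mul_nonneg (mul_nonneg h5 hα0.le) hγ0.le]
  rw [ge_iff_le, hgoal1, hgoal2]
  linarith [hD2, hsum_split.le, hsum_split.ge, hpos2, hlast, hKK]
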